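/- Let π : L∞(F) → L∞(G) be regular with π(0)=0 and ξ' ≥ 0 in L¹(F), and R(Y, ξ') := ess inf { π(ξ) : E[ξ'ξ|G] ≥_μ Y }. Then R(·, ξ') is quasi-affine: for all Y₁, Y₂ ∈ L∞(G) and G-measurable Λ with 0 ≤ Λ ≤ 1, R(ΛY₁ + (1−Λ)Y₂, ξ') ≥ R(Y₁,ξ') ∧ R(Y₂,ξ') and R(ΛY₁ + (1−Λ)Y₂, ξ') ≤ R(Y₁,ξ') ∨ R(Y₂,ξ'). -/

import Mathlib

open MeasureTheory Filter Set

noncomputable section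

/-- `X` is a bounded `F`-measurable random variable (an element of `L∞(F)`). -/
def IsBddMeas {Ω : Type*} (F : MeasurableSpace Ω) (X : Ω → ℝ) : Prop :=
  Measurable[F] X ∧ ∃ C : ℝ, ∀ ω, |X ω| ≤ C

/-- Regularity (REG) of the conditional map `π` with respect to the
sub-σ-algebra `m`: `π (X 1_A + Y 1_{Aᶜ}) = π X 1_A + π Y 1_{Aᶜ}` a.s. -/
def Regular {Ω : Type*} (F m : MeasurableSpace Ω) (μ : @Measure Ω F)
    (π : (Ω → ℝ) → Ω → ℝ) : Prop :=
  ∀ X Y : Ω → ℝ, IsBddMeas F X → IsBddMeas F Y → ∀ A : Set Ω, MeasurableSet[m] A →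
    π (A.indicator X + Aᶜ.indicator Y) =ᵐ[μ] A.indicator (π X) + Aᶜ.indicator (π Y)

/-- `I` is an essential infimum (in the `μ`-a.e. pointwise order) of the set
`S` of random variables. -/
def IsEssInf {Ω : Type*} {F : MeasurableSpace Ω} (μ : @Measure Ω F)
    (S : Set (Ω → ℝ)) (I : Ω → ℝ) : Prop :=
  (∀ f ∈ S, I ≤ᵐ[μ] f) ∧ ∀ g : Ω → ℝ, (∀ f ∈ S, g ≤ᵐ[μ] f) → g ≤ᵐ[μ] I

/-- `I` is an essential supremum (in the `μ`-a.e. pointwise order) of the set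
`S` of random variables. -/
def IsEssSup {Ω : Type*} {F : MeasurableSpace Ω} (μ : @Measure Ω F)
    (S : Set (Ω → ℝ)) (I : Ω → ℝ) : Prop :=
  (∀ f ∈ S, f ≤ᵐ[μ] I) ∧ ∀ g : Ω → ℝ, (∀ f ∈ S, f ≤ᵐ[μ] g) → I ≤ᵐ[μ] g

/-- `R(·, ξ')` is quasi-affine in `Y`: for `G`-measurable `Λ` with `0 ≤ Λ ≤ 1`,
`R(Y₁,ξ') ∧ R(Y₂,ξ') ≤ R(ΛY₁ + (1−Λ)Y₂, ξ') ≤ R(Y₁,ξ') ∨ R(Y₂,ξ')`. -/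
theorem R_quasi_affine
    {Ω : Type*} [F : MeasurableSpace Ω] (μ : Measure Ω) [IsProbabilityMeasure μ]
    (m : MeasurableSpace Ω) (hm : m ≤ F)
    (π : (Ω → ℝ) → Ω → ℝ) (hreg : Regular F m μ π)
    (hπ0 : π 0 =ᵐ[μ] 0)
    (ξ' : Ω → ℝ) (hξ'pos : 0 ≤ ξ') (hξ'int : Integrable ξ' μ)
    (Y₁ Y₂ : Ω → ℝ) (hY₁ : IsBddMeas m Y₁) (hY₂ : IsBddMeas m Y₂)
    (Λ : Ω → ℝ) (hΛm : Measurable[m] Λ) (hΛ : ∀ ω, 0 ≤ Λ ω ∧ Λ ω ≤ 1)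
    (R₁ R₂ R₃ : Ω → ℝ)
    (hR₁ : IsEssInf μ
      {g | ∃ ξ : Ω → ℝ, IsBddMeas F ξ ∧
        (Y₁ ≤ᵐ[μ.withDensity fun ω => ENNReal.ofReal (ξ' ω)]
          μ[fun ω => ξ' ω * ξ ω|m]) ∧ g = π ξ} R₁)
    (hR₂ : IsEssInf μ
      {g | ∃ ξ : Ω → ℝ, IsBddMeas F ξ ∧
        (Y₂ ≤ᵐ[μ.withDensity fun ω => ENNReal.ofReal (ξ' ω)]
          μ[fun ω => ξ' ω * ξ ω|m]) ∧ g = π ξ} R₂)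
    (hR₃ : IsEssInf μ
      {g | ∃ ξ : Ω → ℝ, IsBddMeas F ξ ∧
        ((fun ω => Λ ω * Y₁ ω + (1 - Λ ω) * Y₂ ω)
            ≤ᵐ[μ.withDensity fun ω => ENNReal.ofReal (ξ' ω)]
          μ[fun ω => ξ' ω * ξ ω|m]) ∧ g = π ξ} R₃) :
    ((fun ω => min (R₁ ω) (R₂ ω)) ≤ᵐ[μ] R₃) ∧
    (R₃ ≤ᵐ[μ] fun ω => max (R₁ ω) (R₂ ω)) := by
  classical
  set ν := μ.withDensity fun ω => ENNReal.ofReal (ξ' ω) with hν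
  have hae : ∀ {p : Ω → Prop}, (∀ᵐ ω ∂μ, p ω) → (∀ᵐ ω ∂ν, p ω) := fun h =>
    (withDensity_absolutelyContinuous μ _).ae_le h
  have hint : ∀ ξ : Ω → ℝ, IsBddMeas F ξ → Integrable (fun ω => ξ' ω * ξ ω) μ := by
    intro ξ hξ
    obtain ⟨C, hC⟩ := hξ.2
    have := hξ'int.bdd_mul (c := C) hξ.1.aestronglyMeasurable (Filter.Eventually.of_forall fun x => by
      simpa [Real.norm_eq_abs] using hC x)
    exact this.congr (Filter.Eventually.of_forall fun ω => mul_comm _ _)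
  -- boundedness of patched functions
  have hbdd : ∀ (A : Set Ω), MeasurableSet[m] A → ∀ ξ η : Ω → ℝ, IsBddMeas F ξ →
      IsBddMeas F η → IsBddMeas F (A.indicator ξ + Aᶜ.indicator η) := by
    intro A hA ξ η hξ hη
    obtain ⟨C₁, hC₁⟩ := hξ.2
    obtain ⟨C₂, hC₂⟩ := hη.2
    refine ⟨(hξ.1.indicator (hm _ hA)).add (hη.1.indicator (hm _ hA.compl)), max C₁ C₂, ?_⟩
    intro ω
    by_cases hω : ω ∈ A
    · simp only [Pi.add_apply, Set.indicator_of_mem hω,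
        Set.indicator_of_notMem (by simpa using hω : ω ∉ Aᶜ), add_zero]
      exact le_trans (hC₁ ω) (le_max_left _ _)
    · simp only [Pi.add_apply, Set.indicator_of_notMem hω,
        Set.indicator_of_mem (by simpa using hω : ω ∈ Aᶜ), zero_add]
      exact le_trans (hC₂ ω) (le_max_right _ _)
  -- conditional expectation of the patched function
  have hcond : ∀ (A : Set Ω), MeasurableSet[m] A → ∀ ξ η : Ω → ℝ, IsBddMeas F ξ →
      IsBddMeas F η →
      (μ[fun ω => ξ' ω * (A.indicator ξ + Aᶜ.indicator η) ω|m]) =ᵐ[μ]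
        A.indicator (μ[fun ω => ξ' ω * ξ ω|m]) + Aᶜ.indicator (μ[fun ω => ξ' ω * η ω|m]) := by
    intro A hA ξ η hξ hη
    have hfg : (fun ω => ξ' ω * (A.indicator ξ + Aᶜ.indicator η) ω)
        = A.indicator (fun ω => ξ' ω * ξ ω) + Aᶜ.indicator (fun ω => ξ' ω * η ω) := by
      funext ω
      by_cases hω : ω ∈ A
      · simp [Set.indicator_of_mem hω, Set.indicator_of_notMem (by simpa using hω : ω ∉ Aᶜ)]
      · simp [Set.indicator_of_notMem hω, Set.indicator_of_mem (by simpa using hω : ω ∈ Aᶜ)]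
    have hAF : MeasurableSet[F] A := hm _ hA
    have hAFc : MeasurableSet[F] Aᶜ := hm _ hA.compl
    have hi1 : Integrable (A.indicator fun ω => ξ' ω * ξ ω) μ :=
      Integrable.indicator (μ := μ) (hint ξ hξ) hAF
    have hi2 : Integrable (Aᶜ.indicator fun ω => ξ' ω * η ω) μ :=
      Integrable.indicator (μ := μ) (hint η hη) hAFc
    rw [hfg]
    refine (condExp_add hi1 hi2 m).trans ?_
    exact EventuallyEq.add (condExp_indicator (hint ξ hξ) (hA))
      (condExp_indicator (hint η hη) (hA.compl))
  -- the patching construction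
  have hmem : ∀ (Y : Ω → ℝ) (A : Set Ω), MeasurableSet[m] A → ∀ ξ η : Ω → ℝ,
      IsBddMeas F ξ → IsBddMeas F η →
      (∀ᵐ ω ∂ν, ω ∈ A → Y ω ≤ (μ[fun ω => ξ' ω * ξ ω|m]) ω) →
      (∀ᵐ ω ∂ν, ω ∉ A → Y ω ≤ (μ[fun ω => ξ' ω * η ω|m]) ω) →
      ∃ ζ : Ω → ℝ, IsBddMeas F ζ ∧ (Y ≤ᵐ[ν] μ[fun ω => ξ' ω * ζ ω|m]) ∧
        π ζ =ᵐ[μ] A.indicator (π ξ) + Aᶜ.indicator (π η) := by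
    intro Y A hA ξ η hξ hη h1 h2
    refine ⟨A.indicator ξ + Aᶜ.indicator η, hbdd A hA ξ η hξ hη, ?_, hreg ξ η hξ hη A hA⟩
    filter_upwards [h1, h2, hae (hcond A hA ξ η hξ hη)] with ω h1ω h2ω hcω
    rw [hcω]
    by_cases hω : ω ∈ A
    · simpa [Pi.add_apply, Set.indicator_of_mem hω,
        Set.indicator_of_notMem (by simpa using hω : ω ∉ Aᶜ)] using h1ω hω
    · simpa [Pi.add_apply, Set.indicator_of_notMem hω,
        Set.indicator_of_mem (by simpa using hω : ω ∈ Aᶜ)] using h2ω hω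
  -- nonemptiness of the feasible sets
  have hμae : (ae μ).NeBot := ae_neBot.mpr (IsProbabilityMeasure.ne_zero μ)
  have hnonempty : ∀ (Y R : Ω → ℝ), IsEssInf μ
      {g | ∃ ξ : Ω → ℝ, IsBddMeas F ξ ∧ (Y ≤ᵐ[ν] μ[fun ω => ξ' ω * ξ ω|m]) ∧ g = π ξ} R →
      ∃ ξ : Ω → ℝ, IsBddMeas F ξ ∧ (Y ≤ᵐ[ν] μ[fun ω => ξ' ω * ξ ω|m]) := by
    intro Y R hR
    by_contra h
    push_neg at h
    have hlb : ∀ f ∈ {g | ∃ ξ : Ω → ℝ, IsBddMeas F ξ ∧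
        (Y ≤ᵐ[ν] μ[fun ω => ξ' ω * ξ ω|m]) ∧ g = π ξ}, (fun ω => R ω + 1) ≤ᵐ[μ] f := by
      rintro f ⟨ξ, hb, hf, rfl⟩
      exact absurd hf (h ξ hb)
    obtain ⟨ω, hω⟩ := (hR.2 _ hlb).exists
    simp only at hω
    linarith
  obtain ⟨η₁, hη₁b, hη₁f⟩ := hnonempty Y₁ R₁ hR₁
  obtain ⟨η₂, hη₂b, hη₂f⟩ := hnonempty Y₂ R₂ hR₂
  set A : Set Ω := {ω | Y₁ ω ≤ Y₂ ω} with hAdef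
  have hA : MeasurableSet[m] A := @measurableSet_le ℝ Ω _ _ _ m _ _ _ _ _ hY₁.1 hY₂.1
  constructor
  · -- lower bound : min R₁ R₂ ≤ R₃
    refine hR₃.2 _ ?_
    rintro f ⟨ξ, hξb, hξf, rfl⟩
    obtain ⟨ζ₁, hζ₁b, hζ₁f, hζ₁eq⟩ := hmem Y₁ A hA ξ η₁ hξb hη₁b
      (by filter_upwards [hξf] with ω h hωA
          have h1 : Y₁ ω ≤ Λ ω * Y₁ ω + (1 - Λ ω) * Y₂ ω := by
            have := hΛ ω; have : (1 - Λ ω) * (Y₂ ω - Y₁ ω) ≥ 0 :=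
              mul_nonneg (by linarith [(hΛ ω).2]) (by simpa [hAdef] using hωA)
            nlinarith
          linarith [h])
      (by filter_upwards [hη₁f] with ω h _; exact h)
    obtain ⟨ζ₂, hζ₂b, hζ₂f, hζ₂eq⟩ := hmem Y₂ A hA η₂ ξ hη₂b hξb
      (by filter_upwards [hη₂f] with ω h _; exact h)
      (by filter_upwards [hξf] with ω h hωA
          have hlt : ¬ Y₁ ω ≤ Y₂ ω := hωA
          have h1 : Y₂ ω ≤ Λ ω * Y₁ ω + (1 - Λ ω) * Y₂ ω := by
            have : Λ ω * (Y₁ ω - Y₂ ω) ≥ 0 :=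
              mul_nonneg (hΛ ω).1 (by linarith [not_le.mp hlt])
            nlinarith
          linarith [h])
    have hle₁ := hR₁.1 (π ζ₁) ⟨ζ₁, hζ₁b, hζ₁f, rfl⟩
    have hle₂ := hR₂.1 (π ζ₂) ⟨ζ₂, hζ₂b, hζ₂f, rfl⟩
    filter_upwards [hle₁, hle₂, hζ₁eq, hζ₂eq] with ω h1 h2 e1 e2
    by_cases hω : ω ∈ A
    · have : π ζ₁ ω = π ξ ω := by
        rw [e1]
        simp [Pi.add_apply, Set.indicator_of_mem hω,
          Set.indicator_of_notMem (by simpa using hω : ω ∉ Aᶜ)]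
      calc min (R₁ ω) (R₂ ω) ≤ R₁ ω := min_le_left _ _
        _ ≤ π ζ₁ ω := h1
        _ = π ξ ω := this
    · have : π ζ₂ ω = π ξ ω := by
        rw [e2]
        simp [Pi.add_apply, Set.indicator_of_notMem hω,
          Set.indicator_of_mem (by simpa using hω : ω ∈ Aᶜ)]
      calc min (R₁ ω) (R₂ ω) ≤ R₂ ω := min_le_right _ _
        _ ≤ π ζ₂ ω := h2
        _ = π ξ ω := this
  · -- upper bound : R₃ ≤ max R₁ R₂
    -- Step 1: on A, R₃ ≤ π ξ₂ for every ξ₂ feasible for Y₂.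
    have hstep₂ : ∀ ξ₂ : Ω → ℝ, IsBddMeas F ξ₂ →
        (Y₂ ≤ᵐ[ν] μ[fun ω => ξ' ω * ξ₂ ω|m]) →
        ∀ᵐ ω ∂μ, ω ∈ A → R₃ ω ≤ π ξ₂ ω := by
      intro ξ₂ hξ₂b hξ₂f
      obtain ⟨ζ, hζb, hζf, hζeq⟩ := hmem (fun ω => Λ ω * Y₁ ω + (1 - Λ ω) * Y₂ ω)
        A hA ξ₂ η₁ hξ₂b hη₁b
        (by filter_upwards [hξ₂f] with ω h hωA
            have h1 : Λ ω * Y₁ ω + (1 - Λ ω) * Y₂ ω ≤ Y₂ ω := by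
              have : Λ ω * (Y₂ ω - Y₁ ω) ≥ 0 :=
                mul_nonneg (hΛ ω).1 (by simpa [hAdef] using hωA)
              nlinarith
            exact le_trans h1 h)
        (by filter_upwards [hη₁f] with ω h hωA
            have hlt : ¬ Y₁ ω ≤ Y₂ ω := hωA
            have h1 : Λ ω * Y₁ ω + (1 - Λ ω) * Y₂ ω ≤ Y₁ ω := by
              have : (1 - Λ ω) * (Y₁ ω - Y₂ ω) ≥ 0 :=
                mul_nonneg (by linarith [(hΛ ω).2]) (by linarith [not_le.mp hlt])
              nlinarith
            exact le_trans h1 h)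
      have hle := hR₃.1 (π ζ) ⟨ζ, hζb, hζf, rfl⟩
      filter_upwards [hle, hζeq] with ω h e hωA
      have : π ζ ω = π ξ₂ ω := by
        rw [e]
        simp [Pi.add_apply, Set.indicator_of_mem hωA,
          Set.indicator_of_notMem (by simpa using hωA : ω ∉ Aᶜ)]
      calc R₃ ω ≤ π ζ ω := h
        _ = π ξ₂ ω := this
    -- Step 2: on Aᶜ, R₃ ≤ π ξ₁ for every ξ₁ feasible for Y₁.
    have hstep₁ : ∀ ξ₁ : Ω → ℝ, IsBddMeas F ξ₁ →
        (Y₁ ≤ᵐ[ν] μ[fun ω => ξ' ω * ξ₁ ω|m]) →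
        ∀ᵐ ω ∂μ, ω ∉ A → R₃ ω ≤ π ξ₁ ω := by
      intro ξ₁ hξ₁b hξ₁f
      obtain ⟨ζ, hζb, hζf, hζeq⟩ := hmem (fun ω => Λ ω * Y₁ ω + (1 - Λ ω) * Y₂ ω)
        A hA η₂ ξ₁ hη₂b hξ₁b
        (by filter_upwards [hη₂f] with ω h hωA
            have h1 : Λ ω * Y₁ ω + (1 - Λ ω) * Y₂ ω ≤ Y₂ ω := by
              have : Λ ω * (Y₂ ω - Y₁ ω) ≥ 0 :=
                mul_nonneg (hΛ ω).1 (by simpa [hAdef] using hωA)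
              nlinarith
            exact le_trans h1 h)
        (by filter_upwards [hξ₁f] with ω h hωA
            have hlt : ¬ Y₁ ω ≤ Y₂ ω := hωA
            have h1 : Λ ω * Y₁ ω + (1 - Λ ω) * Y₂ ω ≤ Y₁ ω := by
              have : (1 - Λ ω) * (Y₁ ω - Y₂ ω) ≥ 0 :=
                mul_nonneg (by linarith [(hΛ ω).2]) (by linarith [not_le.mp hlt])
              nlinarith
            exact le_trans h1 h)
      have hle := hR₃.1 (π ζ) ⟨ζ, hζb, hζf, rfl⟩
      filter_upwards [hle, hζeq] with ω h e hωA
      have : π ζ ω = π ξ₁ ω := by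
        rw [e]
        simp [Pi.add_apply, Set.indicator_of_notMem hωA,
          Set.indicator_of_mem (by simpa using hωA : ω ∈ Aᶜ)]
      calc R₃ ω ≤ π ζ ω := h
        _ = π ξ₁ ω := this
    -- Step 3: deduce R₃ ≤ R₂ on A and R₃ ≤ R₁ on Aᶜ.
    have hg₂ : (fun ω => if ω ∈ A then R₃ ω else R₂ ω) ≤ᵐ[μ] R₂ := by
      refine hR₂.2 _ ?_
      rintro f ⟨ξ₂, hb, hf, rfl⟩
      filter_upwards [hstep₂ ξ₂ hb hf, hR₂.1 (π ξ₂) ⟨ξ₂, hb, hf, rfl⟩] with ω h1 h2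
      by_cases hω : ω ∈ A
      · simpa [hω] using h1 hω
      · simpa [hω] using h2
    have hg₁ : (fun ω => if ω ∈ A then R₁ ω else R₃ ω) ≤ᵐ[μ] R₁ := by
      refine hR₁.2 _ ?_
      rintro f ⟨ξ₁, hb, hf, rfl⟩
      filter_upwards [hstep₁ ξ₁ hb hf, hR₁.1 (π ξ₁) ⟨ξ₁, hb, hf, rfl⟩] with ω h1 h2
      by_cases hω : ω ∈ A
      · simpa [hω] using h2
      · simpa [hω] using h1 hω
    filter_upwards [hg₁, hg₂] with ω h1 h2
    by_cases hω : ω ∈ A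
    · simp only [hω, if_pos] at h2
      exact le_trans h2 (le_max_right _ _)
    · simp only [hω, if_neg, if_false] at h1
      exact le_trans h1 (le_max_left _ _)
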